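/- For fixed positive integers a and b, and for all u₁, u₂, j ∈ ℕ, the map sending a triple (A, U₁, U₂) — where A is a j×(u₁+u₂) quasi-shuffle matrix in QSH(u₁,u₂;j), U₁ is a one-hot composition matrix in brew(u₁,a), and U₂ is in brew(u₂,b) — to the matrix product A·diag(U₁,U₂) ∈ ℕ₀^{j×(a+b)}, is injective. -/

import Mathlib

/-- `IsBrew M`: `M` is the one-hot matrix encoding of a composition, i.e. its columns are
standard basis vectors `e_{ι j}` with `ι` weakly increasing, surjective, and with
consecutive increments at most `1`. -/
def IsBrew {v ℓ : ℕ} (M : Matrix (Fin v) (Fin ℓ) ℕ) : Prop :=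
  ∃ ι : Fin ℓ → Fin v, Monotone ι ∧ Function.Surjective ι ∧
    (∀ (j : ℕ) (h : j + 1 < ℓ),
      ((ι ⟨j + 1, h⟩ : Fin v) : ℕ) ≤ ((ι ⟨j, Nat.lt_of_succ_lt h⟩ : Fin v) : ℕ) + 1) ∧
    M = Matrix.of fun i j => if i = ι j then 1 else 0

/-- `IsQSH M` (for `M` of size `j × (m+s)`): the columns of `M` are standard basis vectors
`e_{ι₁},…,e_{ι_m},e_{κ₁},…,e_{κ_s}` with `ι` and `κ` strictly increasing, and `M` is right
invertible (every standard basis vector occurs as a column). -/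
def IsQSH {m s j : ℕ} (M : Matrix (Fin j) (Fin (m + s)) ℕ) : Prop :=
  ∃ ι : Fin m → Fin j, ∃ κ : Fin s → Fin j, StrictMono ι ∧ StrictMono κ ∧
    Function.Surjective (Sum.elim ι κ) ∧
    M = Matrix.of fun r c =>
      Sum.elim (fun p => if r = ι p then 1 else 0) (fun q => if r = κ q then 1 else 0)
        (finSumFinEquiv.symm c)

/-- `IsSH M`: `M` is a shuffle permutation matrix
`[e_{ι₁} ⋯ e_{ι_a} e_{κ₁} ⋯ e_{κ_b}]` with `ι`, `κ` strictly increasing. -/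
def IsSH {a b : ℕ} (M : Matrix (Fin (a + b)) (Fin (a + b)) ℕ) : Prop :=
  ∃ ι : Fin a → Fin (a + b), ∃ κ : Fin b → Fin (a + b), StrictMono ι ∧ StrictMono κ ∧
    Function.Bijective (Sum.elim ι κ) ∧
    M = Matrix.of fun r c =>
      Sum.elim (fun p => if r = ι p then 1 else 0) (fun q => if r = κ q then 1 else 0)
        (finSumFinEquiv.symm c)

/-- Block-diagonal concatenation `diag(U₁, U₂)` of rectangular matrices. -/
def blockDiag {u₁ u₂ a b : ℕ} (U₁ : Matrix (Fin u₁) (Fin a) ℕ)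
    (U₂ : Matrix (Fin u₂) (Fin b) ℕ) : Matrix (Fin (u₁ + u₂)) (Fin (a + b)) ℕ :=
  Matrix.reindex finSumFinEquiv finSumFinEquiv (Matrix.fromBlocks U₁ 0 0 U₂)

/-- The factorial `U!` of a brew matrix: the product of the factorials of the parts of
its corresponding composition (the parts are the row sums). -/
def brewFact {v ℓ : ℕ} (M : Matrix (Fin v) (Fin ℓ) ℕ) : ℕ :=
  ∏ i : Fin v, Nat.factorial (∑ j : Fin ℓ, M i j)

lemma entry_eq {u₁ u₂ a b j : ℕ} (ι : Fin u₁ → Fin j) (κ : Fin u₂ → Fin j)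
    (ι₁ : Fin a → Fin u₁) (κ₂ : Fin b → Fin u₂) (r : Fin j) (c : Fin (a + b)) :
    ((Matrix.of fun r c => Sum.elim (fun p => if r = ι p then (1:ℕ) else 0)
        (fun q => if r = κ q then 1 else 0) (finSumFinEquiv.symm c)) *
      blockDiag (Matrix.of fun i j => if i = ι₁ j then (1:ℕ) else 0)
        (Matrix.of fun i j => if i = κ₂ j then (1:ℕ) else 0)) r c
    = if r = Sum.elim (ι ∘ ι₁) (κ ∘ κ₂) (finSumFinEquiv.symm c) then 1 else 0 := by
  rw [Matrix.mul_apply, ← Equiv.sum_comp finSumFinEquiv, Fintype.sum_sum_type]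
  rcases hc : finSumFinEquiv.symm c with c₁ | c₂ <;>
    simp [blockDiag, Matrix.reindex_apply, Matrix.submatrix_apply, hc,
      Matrix.fromBlocks_apply₁₁, Matrix.fromBlocks_apply₂₂, mul_ite, mul_one, mul_zero,
      Finset.sum_ite_eq', eq_comm] <;> split_ifs <;> simp_all

/-- A strictly monotone map out of `Fin n` is determined by its image, and composition with
a surjection is determined. -/
lemma strictMono_eq_of_comp_eq {n m j : ℕ} {ι ι' : Fin n → Fin j} {f f' : Fin m → Fin n}
    (hι : StrictMono ι) (hι' : StrictMono ι') (hf : Function.Surjective f)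
    (hf' : Function.Surjective f') (h : ι ∘ f = ι' ∘ f') : ι = ι' := by
  have himg : Finset.image ι Finset.univ = Finset.image ι' Finset.univ :=
    calc Finset.image ι Finset.univ = Finset.image (ι ∘ f) Finset.univ := by
          rw [← Finset.image_image, Finset.image_univ_of_surjective hf]
      _ = Finset.image (ι' ∘ f') Finset.univ := by rw [h]
      _ = Finset.image ι' Finset.univ := by
          rw [← Finset.image_image, Finset.image_univ_of_surjective hf']
  have hcard : (Finset.image ι Finset.univ).card = n := by
    rw [Finset.card_image_of_injective _ hι.injective, Finset.card_univ, Fintype.card_fin]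
  have h1 : ι = (Finset.image ι Finset.univ).orderEmbOfFin hcard :=
    Finset.orderEmbOfFin_unique hcard
      (fun x => Finset.mem_image_of_mem _ (Finset.mem_univ x)) hι
  have hcard' : (Finset.image ι Finset.univ).card = n := hcard
  have h2 : ι' = (Finset.image ι Finset.univ).orderEmbOfFin hcard := by
    apply Finset.orderEmbOfFin_unique hcard _ hι'
    intro x
    rw [himg]
    exact Finset.mem_image_of_mem _ (Finset.mem_univ x)
  rw [h1, h2]

/-- the map `(A, U₁, U₂) ↦ A · diag(U₁, U₂)` from
`QSH(u₁,u₂;j) × brew(u₁,a) × brew(u₂,b)` to `ℕ₀^{j×(a+b)}` is injective. -/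
theorem M_injective (a b : ℕ) (ha : 0 < a) (hb : 0 < b) (u₁ u₂ j : ℕ)
    (A A' : Matrix (Fin j) (Fin (u₁ + u₂)) ℕ)
    (U₁ U₁' : Matrix (Fin u₁) (Fin a) ℕ) (U₂ U₂' : Matrix (Fin u₂) (Fin b) ℕ)
    (hA : IsQSH A) (hA' : IsQSH A')
    (hU₁ : IsBrew U₁) (hU₁' : IsBrew U₁') (hU₂ : IsBrew U₂) (hU₂' : IsBrew U₂')
    (h : A * blockDiag U₁ U₂ = A' * blockDiag U₁' U₂') :
    A = A' ∧ U₁ = U₁' ∧ U₂ = U₂' := by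
  obtain ⟨ι, κ, hι, hκ, hsurj, hAe⟩ := hA
  obtain ⟨ι', κ', hι', hκ', hsurj', hAe'⟩ := hA'
  obtain ⟨ι₁, hι₁m, hι₁s, -, hU₁e⟩ := hU₁
  obtain ⟨ι₁', hι₁m', hι₁s', -, hU₁e'⟩ := hU₁'
  obtain ⟨κ₂, hκ₂m, hκ₂s, -, hU₂e⟩ := hU₂
  obtain ⟨κ₂', hκ₂m', hκ₂s', -, hU₂e'⟩ := hU₂'
  subst hAe hAe' hU₁e hU₁e' hU₂e hU₂e'
  have key : ∀ c : Fin (a + b), Sum.elim (ι ∘ ι₁) (κ ∘ κ₂) (finSumFinEquiv.symm c)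
      = Sum.elim (ι' ∘ ι₁') (κ' ∘ κ₂') (finSumFinEquiv.symm c) := by
    intro c
    have h1 := Matrix.ext_iff.mpr h (Sum.elim (ι ∘ ι₁) (κ ∘ κ₂) (finSumFinEquiv.symm c)) c
    rw [entry_eq, entry_eq, if_pos rfl] at h1
    by_contra hne
    rw [if_neg hne] at h1
    exact one_ne_zero h1
  have hg : ι ∘ ι₁ = ι' ∘ ι₁' := by
    funext c
    have := key (finSumFinEquiv (Sum.inl c))
    simpa using this
  have hh : κ ∘ κ₂ = κ' ∘ κ₂' := by
    funext c
    have := key (finSumFinEquiv (Sum.inr c))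
    simpa using this
  have hιι : ι = ι' := strictMono_eq_of_comp_eq hι hι' hι₁s hι₁s' hg
  have hκκ : κ = κ' := strictMono_eq_of_comp_eq hκ hκ' hκ₂s hκ₂s' hh
  have hι₁eq : ι₁ = ι₁' := by
    funext c
    apply hι.injective
    have := congrFun hg c
    simpa [hιι] using this
  have hκ₂eq : κ₂ = κ₂' := by
    funext c
    apply hκ.injective
    have := congrFun hh c
    simpa [hκκ] using this
  subst hιι hκκ hι₁eq hκ₂eq
  exact ⟨rfl, rfl, rfl⟩
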